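/- Let D be the dihedral group of order 2q with q odd, generated by σ, ρ with σ² = ρ^q = 1 and σρ = ρ⁻¹σ. Let G = ⟨ρ⟩ and let B be a D-module (an abelian group with D-action). Then the submodule I_G·B (the augmentation ideal of G applied to B) is contained in B^Σ + B^Σ', where Σ = ⟨σ⟩, Σ' = ⟨σρ⟩, and B^H denotes the subgroup of elements fixed by H. -/

import Mathlib

open DihedralGroup

/-- The subgroup of points fixed by a subgroup `H` of the dihedral group. -/
def fixedBy {q : ℕ} (H : Subgroup (DihedralGroup q)) (B : Type*) [AddCommGroup B]
    [DistribMulAction (DihedralGroup q) B] : AddSubgroup B where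
  carrier := {b | ∀ h ∈ H, h • b = b}
  zero_mem' := fun h _ => smul_zero h
  add_mem' := by intro a b ha hb h hh; rw [smul_add, ha h hh, hb h hh]
  neg_mem' := by intro a ha h hh; rw [smul_neg, ha h hh]

/-- `I_G·B = (1-ρ)B`, the augmentation submodule for the rotation subgroup `G = ⟨ρ⟩`. -/
def augG (q : ℕ) (B : Type*) [AddCommGroup B]
    [DistribMulAction (DihedralGroup q) B] : AddSubgroup B :=
  AddMonoidHom.range
    { toFun := fun b => b - (r 1 : DihedralGroup q) • b
      map_zero' := by simp
      map_add' := by intro x y; simp only [smul_add]; abel }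

lemma mem_fixedBy_closure {q : ℕ} (B : Type*) [AddCommGroup B]
    [DistribMulAction (DihedralGroup q) B] {g : DihedralGroup q} {x : B}
    (hg : g • x = x) : x ∈ fixedBy (Subgroup.closure {g}) B := by
  intro h hh
  induction hh using Subgroup.closure_induction with
  | mem a ha => rw [Set.mem_singleton_iff] at ha; subst ha; exact hg
  | one => exact one_smul _ _
  | mul a b _ _ ha hb => rw [mul_smul, hb, ha]
  | inv a _ ha =>
    calc a⁻¹ • x = a⁻¹ • (a • x) := by rw [ha]
    _ = x := inv_smul_smul a x

/-- For the dihedral group `D` of order `2q` (`q` odd) with `σ² = ρ^q = 1`,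
`σρ = ρ⁻¹σ`, and any `D`-module `B`, the augmentation submodule `I_G·B` (for `G = ⟨ρ⟩`)
is contained in `B^Σ + B^Σ'`, where `Σ = ⟨σ⟩` and `Σ' = ⟨σρ⟩`. -/
theorem aug_le_fixed_sup_fixed (q : ℕ) [NeZero q] (hq : Odd q)
    (B : Type*) [AddCommGroup B] [DistribMulAction (DihedralGroup q) B] :
    augG q B ≤
      fixedBy (Subgroup.closure {(sr 0 : DihedralGroup q)}) B ⊔
        fixedBy (Subgroup.closure {(sr 0 * r 1 : DihedralGroup q)}) B := by
  rintro c ⟨b, rfl⟩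
  refine AddSubgroup.mem_sup.2
    ⟨-((r 1 : DihedralGroup q) • b + (sr 0 : DihedralGroup q) • (r 1 : DihedralGroup q) • b),
    AddSubgroup.neg_mem _ (mem_fixedBy_closure B ?_),
    b + (sr 0 * r 1 : DihedralGroup q) • b, mem_fixedBy_closure B ?_, ?_⟩
  · rw [smul_add, smul_smul, smul_smul]
    have : (sr 0 * (sr 0 * r 1) : DihedralGroup q) = r 1 := by
      rw [← mul_assoc]; simp [sr_mul_sr]
    rw [this]
    abel
  · rw [smul_add, smul_smul]
    have : (sr 0 * r 1 * (sr 0 * r 1) : DihedralGroup q) = 1 := by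
      simp [sr_mul_r, sr_mul_sr]
    rw [this, one_smul]; abel
  · have : ((sr 0 * r 1 : DihedralGroup q)) • b
        = (sr 0 : DihedralGroup q) • (r 1 : DihedralGroup q) • b := by
      rw [mul_smul]
    rw [this]
    show _ = b - (r 1 : DihedralGroup q) • b
    abel
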